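/- Let n ≥ 6, let C = x_0, x_1, …, x_{n−1}, x_0 be a cycle of length n, let a, b, c be three pairwise distinct colors, and let i be an integer with 3 ≤ i ≤ n − 3. If the edges x_0x_1, x_1x_2, x_2x_3 are pre-colored a, b, c respectively and the edges x_ix_{i+1}, x_{i+1}x_{i+2}, x_{i+2}x_{i+3} are pre-colored a, c, b respectively, then this partial edge coloring can be extended to a 3-star edge coloring of C using only the colors {a, b, c}. -/
import Mathlib

/-- The coloring pattern: colors `0, 1, 2` stand for `a, b, c`. -/
def starB (n i m : ℕ) : ℕ :=
  if m < i then
    (if m + 1 = i ∧ i % 3 = 1 then 1 else m % 3)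
  else if m = n - 1 ∧ (n - i) % 3 = 1 then 2
  else (3 - (m - i) % 3) % 3

lemma starB_lt (n i m : ℕ) : starB n i m < 3 := by
  unfold starB; split_ifs <;> omega

set_option maxHeartbeats 4000000 in
lemma starB_main (n i : ℕ) (hn : 6 ≤ n) (hi : 3 ≤ i) (hi' : i + 3 ≤ n)
    (j : ℕ) (hj : j < n) :
    starB n i j ≠ starB n i ((j+1) % n) ∧
    ¬ (starB n i j = starB n i ((j+2) % n) ∧
       starB n i ((j+1) % n) = starB n i ((j+3) % n)) := by
  rcases Nat.lt_or_ge (j+3) n with h | h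
  · rw [Nat.mod_eq_of_lt (by omega : j+1 < n), Nat.mod_eq_of_lt (by omega : j+2 < n),
      Nat.mod_eq_of_lt (by omega : j+3 < n)]
    unfold starB
    split_ifs <;> first | omega | (refine ⟨by omega, by simp⟩)
  · rcases (by omega : j = n - 3 ∨ j = n - 2 ∨ j = n - 1) with hj3 | hj3 | hj3
    · rw [Nat.mod_eq_of_lt (by omega : j+1 < n), Nat.mod_eq_of_lt (by omega : j+2 < n),
        show j + 3 = n by omega, Nat.mod_self]
      unfold starB
      split_ifs <;> first | omega | (refine ⟨by omega, by simp⟩)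
    · rw [Nat.mod_eq_of_lt (by omega : j+1 < n), show j + 2 = n by omega, Nat.mod_self,
        show j + 3 = n + 1 by omega, Nat.add_mod_left, Nat.mod_eq_of_lt (by omega : 1 < n)]
      unfold starB
      split_ifs <;> first | omega | (refine ⟨by omega, by simp⟩)
    · rw [show j + 1 = n by omega, Nat.mod_self,
        show j + 2 = n + 1 by omega, Nat.add_mod_left, Nat.mod_eq_of_lt (by omega : 1 < n),
        show j + 3 = n + 2 by omega, Nat.add_mod_left, Nat.mod_eq_of_lt (by omega : 2 < n)]
      unfold starB
      split_ifs <;> first | omega | (refine ⟨by omega, by simp⟩)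

/-- Interpret a numeric color as an element of `α`. -/
def starF {α : Type*} (a b c : α) (k : ℕ) : α :=
  if k = 0 then a else if k = 1 then b else c

lemma starF_mem {α : Type*} (a b c : α) (k : ℕ) :
    starF a b c k ∈ ({a, b, c} : Set α) := by
  unfold starF; split_ifs <;> simp

lemma starF_inj {α : Type*} {a b c : α} (hab : a ≠ b) (hac : a ≠ c) (hbc : b ≠ c)
    {x y : ℕ} (hx : x < 3) (hy : y < 3) :
    starF a b c x = starF a b c y ↔ x = y := by
  interval_cases x <;> interval_cases y <;>
    simp [starF, hab, hac, hbc, hab.symm, hac.symm, hbc.symm]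

lemma starF_inj' {α : Type*} {a b c : α} (hab : a ≠ b) (hac : a ≠ c) (hbc : b ≠ c)
    (n i x y : ℕ) :
    starF a b c (starB n i x) = starF a b c (starB n i y) ↔ starB n i x = starB n i y :=
  starF_inj hab hac hbc (starB_lt n i x) (starB_lt n i y)

/-- A 3-star edge coloring of the cycle `x_0, x_1, …, x_{n-1}, x_0`, where the edge
`x_i x_{i+1}` (indices mod `n`) receives color `g i`: the coloring is proper
(adjacent edges get distinct colors) and no path or cycle with four edges is bicolored
(for a proper coloring this means no four consecutive edges are colored `a b a b`). -/
def IsStarEdgeColoringCycle {α : Type*} (n : ℕ) (g : ZMod n → α) : Prop :=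
  (∀ i, g i ≠ g (i + 1)) ∧ ∀ i, ¬ (g i = g (i + 2) ∧ g (i + 1) = g (i + 3))
theorem stmt_3 {α : Type*} (n : ℕ) (hn : 6 ≤ n)
    (a b c : α) (hab : a ≠ b) (hac : a ≠ c) (hbc : b ≠ c)
    (i : ℕ) (hi : 3 ≤ i) (hi' : i ≤ n - 3) :
    ∃ g : ZMod n → α, (∀ r, g r ∈ ({a, b, c} : Set α)) ∧
      IsStarEdgeColoringCycle n g ∧ g 0 = a ∧ g 1 = b ∧ g 2 = c ∧
      g (i : ZMod n) = a ∧ g ((i : ZMod n) + 1) = c ∧ g ((i : ZMod n) + 2) = b := by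
  haveI : NeZero n := ⟨by omega⟩
  haveI : Fact (1 < n) := ⟨by omega⟩
  have hi3 : i + 3 ≤ n := by omega
  have hval : ∀ (r : ZMod n) (k : ℕ), (r + (k : ℕ)).val = (r.val + k) % n := by
    intro r k
    rw [ZMod.val_add, ZMod.val_natCast]
    conv_rhs => rw [Nat.add_mod]
    rw [Nat.mod_eq_of_lt (ZMod.val_lt r)]
  have e1 : ∀ r : ZMod n, (r + 1).val = (r.val + 1) % n := fun r => by
    rw [show (1 : ZMod n) = ((1 : ℕ) : ZMod n) by norm_cast]; exact hval r 1
  have e2 : ∀ r : ZMod n, (r + 2).val = (r.val + 2) % n := fun r => by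
    rw [show (2 : ZMod n) = ((2 : ℕ) : ZMod n) by norm_cast]; exact hval r 2
  have e3 : ∀ r : ZMod n, (r + 3).val = (r.val + 3) % n := fun r => by
    rw [show (3 : ZMod n) = ((3 : ℕ) : ZMod n) by norm_cast]; exact hval r 3
  have hB0 : starB n i 0 = 0 := by unfold starB; split_ifs <;> omega
  have hB1 : starB n i 1 = 1 := by unfold starB; split_ifs <;> omega
  have hB2 : starB n i 2 = 2 := by unfold starB; split_ifs <;> omega
  have hBi : starB n i i = 0 := by unfold starB; split_ifs <;> omega
  have hBi1 : starB n i (i+1) = 2 := by unfold starB; split_ifs <;> omega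
  have hBi2 : starB n i (i+2) = 1 := by unfold starB; split_ifs <;> omega
  refine ⟨fun r => starF a b c (starB n i r.val), fun r => starF_mem a b c _,
    ⟨?_, ?_⟩, ?_, ?_, ?_, ?_, ?_, ?_⟩
  · intro r
    show starF a b c (starB n i r.val) ≠ starF a b c (starB n i (r + 1).val)
    rw [ne_eq, e1 r, starF_inj' hab hac hbc]
    exact (starB_main n i hn hi hi3 r.val (ZMod.val_lt r)).1
  · intro r
    show ¬ (starF a b c (starB n i r.val) = starF a b c (starB n i (r + 2).val) ∧
      starF a b c (starB n i (r + 1).val) = starF a b c (starB n i (r + 3).val))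
    simp only [e1 r, e2 r, e3 r, starF_inj' hab hac hbc]
    exact (starB_main n i hn hi hi3 r.val (ZMod.val_lt r)).2
  · show starF a b c (starB n i (0 : ZMod n).val) = a
    rw [ZMod.val_zero, hB0]; simp [starF]
  · show starF a b c (starB n i (1 : ZMod n).val) = b
    rw [ZMod.val_one n, hB1]; simp [starF]
  · show starF a b c (starB n i (2 : ZMod n).val) = c
    rw [show (2 : ZMod n) = ((2 : ℕ) : ZMod n) by norm_cast, ZMod.val_natCast,
      Nat.mod_eq_of_lt (by omega), hB2]
    simp [starF]
  · show starF a b c (starB n i ((i : ℕ) : ZMod n).val) = a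
    rw [ZMod.val_natCast, Nat.mod_eq_of_lt (by omega), hBi]; simp [starF]
  · show starF a b c (starB n i ((i : ZMod n) + 1).val) = c
    rw [show ((i : ZMod n) + 1) = ((i + 1 : ℕ) : ZMod n) by push_cast; ring,
      ZMod.val_natCast, Nat.mod_eq_of_lt (by omega), hBi1]
    simp [starF]
  · show starF a b c (starB n i ((i : ZMod n) + 2).val) = b
    rw [show ((i : ZMod n) + 2) = ((i + 2 : ℕ) : ZMod n) by push_cast; ring,
      ZMod.val_natCast, Nat.mod_eq_of_lt (by omega), hBi2]
    simp [starF]
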